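/- (Steinitz Lemma) Let ‖·‖ be an arbitrary norm on ℝ^d and let v_1,…,v_n ∈ ℝ^d satisfy v_1 + ⋯ + v_n = 0 and ‖v_i‖ ≤ 1 for all i = 1,…,n. Then there exists a permutation σ of {1,…,n} such that for all i = 1,…,n it holds that ‖v_{σ(1)} + ⋯ + v_{σ(i)}‖ ≤ d. -/

import Mathlib

open Finset

lemma steinitz_step (d n : ℕ) (v : Fin n → Fin d → ℝ)
    (A : Finset (Fin n)) (k : ℕ) (hk : d + 1 ≤ k) (hcard : A.card = k)
    (lam : Fin n → ℝ) (h01 : ∀ i, 0 ≤ lam i ∧ lam i ≤ 1)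
    (hsupp : ∀ i ∉ A, lam i = 0)
    (hsumA : ∑ i ∈ A, lam i = (k : ℝ) - d)
    (hvec : ∑ i ∈ A, lam i • v i = 0) :
    ∃ (A' : Finset (Fin n)) (lam' : Fin n → ℝ), A' ⊆ A ∧ A'.card = k - 1 ∧
      (∀ i, 0 ≤ lam' i ∧ lam' i ≤ 1) ∧ (∀ i ∉ A', lam' i = 0) ∧
      (∑ i ∈ A', lam' i = ((k : ℝ) - 1) - d) ∧ (∑ i ∈ A', lam' i • v i = 0) := by
  classical
  set P : Set (Fin n → ℝ) :=
    {x | (∀ i, 0 ≤ x i ∧ x i ≤ 1) ∧ (∀ i ∉ A, x i = 0) ∧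
      (∑ i ∈ A, x i = ((k : ℝ) - 1) - d) ∧ (∑ i ∈ A, x i • v i = 0)} with hP
  have hkd : (0:ℝ) < (k:ℝ) - d := by
    have : (d:ℝ) + 1 ≤ k := by exact_mod_cast hk
    linarith
  -- nonempty
  have hc0 : 0 ≤ ((k:ℝ) - 1 - d) / ((k:ℝ) - d) := by
    apply div_nonneg _ hkd.le
    have : (d:ℝ) + 1 ≤ k := by exact_mod_cast hk
    linarith
  have hc1 : ((k:ℝ) - 1 - d) / ((k:ℝ) - d) ≤ 1 := by
    rw [div_le_one hkd]; linarith
  have hne : P.Nonempty := by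
    refine ⟨fun i => (((k:ℝ) - 1 - d) / ((k:ℝ) - d)) * lam i, ?_, ?_, ?_, ?_⟩
    · intro i
      constructor
      · exact mul_nonneg hc0 (h01 i).1
      · calc ((k:ℝ) - 1 - d) / ((k:ℝ) - d) * lam i ≤ 1 * 1 :=
            mul_le_mul hc1 (h01 i).2 (h01 i).1 one_pos.le
        _ = 1 := by ring
    · intro i hi; simp [hsupp i hi]
    · rw [← Finset.mul_sum, hsumA]
      field_simp
    · have : ∀ i ∈ A, ((((k:ℝ) - 1 - d) / ((k:ℝ) - d)) * lam i) • v i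
          = (((k:ℝ) - 1 - d) / ((k:ℝ) - d)) • (lam i • v i) := by
        intro i _; rw [mul_smul]
      rw [Finset.sum_congr rfl this, ← Finset.smul_sum, hvec, smul_zero]
  -- closed
  have hclosed : IsClosed P := by
    have h1 : IsClosed {x : Fin n → ℝ | ∀ i, 0 ≤ x i ∧ x i ≤ 1} := by
      have : {x : Fin n → ℝ | ∀ i, 0 ≤ x i ∧ x i ≤ 1}
          = ⋂ i, ((fun x : Fin n → ℝ => x i) ⁻¹' Set.Icc 0 1) := by
        ext x; simp [Set.mem_iInter, Set.mem_Icc]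
      rw [this]
      exact isClosed_iInter fun i => isClosed_Icc.preimage (continuous_apply i)
    have h2 : IsClosed {x : Fin n → ℝ | ∀ i ∉ A, x i = 0} := by
      have : {x : Fin n → ℝ | ∀ i ∉ A, x i = 0}
          = ⋂ i, ⋂ (_ : i ∉ A), {x : Fin n → ℝ | x i = 0} := by
        ext x; simp
      rw [this]
      exact isClosed_iInter fun i => isClosed_iInter fun _ =>
        isClosed_eq (continuous_apply i) continuous_const
    have h3 : IsClosed {x : Fin n → ℝ | ∑ i ∈ A, x i = ((k : ℝ) - 1) - d} :=
      isClosed_eq (continuous_finset_sum _ fun i _ => continuous_apply i) continuous_const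
    have h4 : IsClosed {x : Fin n → ℝ | ∑ i ∈ A, x i • v i = 0} :=
      isClosed_eq (continuous_finset_sum _ fun i _ =>
        (continuous_apply i).smul continuous_const) continuous_const
    have : P = _ ∩ (_ ∩ (_ ∩ _)) := rfl
    exact this ▸ h1.inter (h2.inter (h3.inter h4))
  -- compact
  have hcomp : IsCompact P := by
    apply IsCompact.of_isClosed_subset (isCompact_Icc (a := (0 : Fin n → ℝ)) (b := 1)) hclosed
    intro x hx
    exact ⟨fun i => (hx.1 i).1, fun i => (hx.1 i).2⟩
  obtain ⟨μ, hμP, hμext⟩ := hcomp.extremePoints_nonempty hne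
  obtain ⟨hμ01, hμsupp, hμsum, hμvec⟩ := hμP
  -- the extreme point has a zero coordinate in A
  have hzero : ∃ i ∈ A, μ i = 0 := by
    by_contra hno
    push_neg at hno
    have hpos : ∀ i ∈ A, 0 < μ i := fun i hi => lt_of_le_of_ne (hμ01 i).1 (Ne.symm (hno i hi))
    set S : Finset (Fin n) := A.filter (fun i => μ i < 1) with hS
    have hSsub : S ⊆ A := Finset.filter_subset _ _
    have hone : ∀ i ∈ A, i ∉ S → μ i = 1 := by
      intro i hi hiS
      have : ¬ μ i < 1 := by
        intro h; exact hiS (Finset.mem_filter.2 ⟨hi, h⟩)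
      exact le_antisymm (hμ01 i).2 (not_lt.1 this)
    have hsplit : ∑ i ∈ A \ S, μ i + ∑ i ∈ S, μ i = ∑ i ∈ A, μ i :=
      Finset.sum_sdiff hSsub
    have hAS : ∑ i ∈ A \ S, μ i = ((A \ S).card : ℝ) := by
      rw [Finset.sum_congr rfl (fun i hi => hone i (Finset.mem_sdiff.1 hi).1 (Finset.mem_sdiff.1 hi).2)]
      simp
    have hcardAS : (A \ S).card = k - S.card := by
      rw [Finset.card_sdiff_of_subset hSsub, hcard]
    have hScard_le : S.card ≤ k := hcard ▸ Finset.card_le_card hSsub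
    have hsumS : ∑ i ∈ S, μ i = (S.card : ℝ) - 1 - d := by
      have hcast : ((A \ S).card : ℝ) = (k : ℝ) - S.card := by
        rw [hcardAS, Nat.cast_sub hScard_le]
      rw [hAS, hcast] at hsplit
      rw [hμsum] at hsplit
      linarith
    -- S has at least d+2 elements
    have hSbig : d + 2 ≤ S.card := by
      by_contra hsm
      push_neg at hsm
      have h1 : (S.card : ℝ) - 1 - d ≤ 0 := by
        have : (S.card : ℝ) ≤ d + 1 := by exact_mod_cast Nat.lt_succ_iff.1 hsm
        linarith
      rcases Finset.eq_empty_or_nonempty S with hSe | hSne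
      · rw [hSe] at hsumS
        simp at hsumS
        have : (0:ℝ) < (d:ℝ) + 1 := by positivity
        linarith
      · have : 0 < ∑ i ∈ S, μ i :=
          Finset.sum_pos (fun i hi => hpos i (hSsub hi)) hSne
        rw [hsumS] at this
        linarith
    -- build a nonzero kernel direction supported on S
    have hfinrank₁ : Module.finrank ℝ (↥S → ℝ) = S.card := by
      simp [Module.finrank_pi]
    have hfinrank₂ : Module.finrank ℝ (ℝ × (Fin d → ℝ)) = 1 + d := by
      simp [Module.finrank_prod, Module.finrank_pi]
    let Φ : (↥S → ℝ) →ₗ[ℝ] ℝ × (Fin d → ℝ) :=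
      { toFun := fun w => (∑ i, w i, ∑ i, w i • v (i : Fin n))
        map_add' := fun x y => by
          simp [Prod.mk_add_mk, Prod.mk.injEq, Finset.sum_add_distrib, add_smul]
        map_smul' := fun c x => by
          simp [Prod.smul_mk, Prod.mk.injEq, ← Finset.mul_sum, Finset.smul_sum, smul_smul] }
    have hker : LinearMap.ker Φ ≠ ⊥ := by
      apply LinearMap.ker_ne_bot_of_finrank_lt
      rw [hfinrank₁, hfinrank₂]
      omega
    obtain ⟨w, hwker, hw0⟩ := Submodule.exists_mem_ne_zero_of_ne_bot hker
    have hΦw := LinearMap.mem_ker.1 hwker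
    have hΦw1 : ∑ i, w i = 0 := congrArg Prod.fst hΦw
    have hΦw2 : ∑ i : ↥S, w i • v (i : Fin n) = 0 := congrArg Prod.snd hΦw
    -- extend w by zero outside S
    set wh : Fin n → ℝ := fun i => if h : i ∈ S then w ⟨i, h⟩ else 0 with hwh
    have hwhS : ∀ i ∉ S, wh i = 0 := by intro i hi; simp [hwh, hi]
    have hwhval : ∀ i : ↥S, wh (i : Fin n) = w i := by
      intro i; simp [hwh, i.2]
    have hwhA1 : ∑ i ∈ A, wh i = 0 := by
      rw [← Finset.sum_subset hSsub (fun i _ hi => hwhS i hi)]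
      rw [← Finset.sum_attach S wh]
      rw [Finset.sum_congr rfl (fun i _ => hwhval i)]
      exact hΦw1
    have hwhA2 : ∑ i ∈ A, wh i • v i = 0 := by
      rw [← Finset.sum_subset hSsub (fun i _ hi => by rw [hwhS i hi, zero_smul])]
      rw [← Finset.sum_attach S (fun i => wh i • v i)]
      rw [Finset.sum_congr rfl (fun i _ => by rw [hwhval i])]
      exact hΦw2
    -- choose a small ε
    have hSne' : S.Nonempty := Finset.card_pos.1 (by omega)
    set m : ℝ := S.inf' hSne' (fun i => min (μ i) (1 - μ i)) with hm
    have hm0 : 0 < m := by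
      rw [hm, Finset.lt_inf'_iff]
      intro i hi
      exact lt_min (hpos i (hSsub hi)) (by
        have := (Finset.mem_filter.1 (hS ▸ hi)).2
        linarith)
    set M : ℝ := S.sup' hSne' (fun i => |wh i|) with hM
    have hM0 : 0 ≤ M := by
      obtain ⟨i, hi⟩ := hSne'
      exact le_trans (abs_nonneg (wh i)) (Finset.le_sup' (fun i => |wh i|) hi)
    set ε : ℝ := m / (M + 1) with hε
    have hε0 : 0 < ε := div_pos hm0 (by linarith)
    have hkey : ∀ i ∈ S, |ε * wh i| ≤ min (μ i) (1 - μ i) := by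
      intro i hi
      have h1 : |wh i| ≤ M := Finset.le_sup' (fun i => |wh i|) hi
      have : |ε * wh i| = ε * |wh i| := by
        rw [abs_mul, abs_of_pos hε0]
      rw [this]
      calc ε * |wh i| ≤ ε * (M + 1) := by
            apply mul_le_mul_of_nonneg_left (by linarith) hε0.le
        _ = m := by rw [hε]; field_simp
        _ ≤ min (μ i) (1 - μ i) := Finset.inf'_le _ hi
    -- the two perturbed points
    set x₁ : Fin n → ℝ := fun i => μ i + ε * wh i with hx₁d
    set x₂ : Fin n → ℝ := fun i => μ i - ε * wh i with hx₂d
    have hbounds : ∀ i, (0 ≤ x₁ i ∧ x₁ i ≤ 1) ∧ (0 ≤ x₂ i ∧ x₂ i ≤ 1) := by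
      intro i
      by_cases hi : i ∈ S
      · have h := hkey i hi
        have h1 : -(min (μ i) (1 - μ i)) ≤ ε * wh i ∧ ε * wh i ≤ min (μ i) (1 - μ i) :=
          abs_le.1 h
        have h2 : min (μ i) (1 - μ i) ≤ μ i := min_le_left _ _
        have h3 : min (μ i) (1 - μ i) ≤ 1 - μ i := min_le_right _ _
        constructor <;> constructor <;> simp only [hx₁d, hx₂d] <;> linarith [h1.1, h1.2]
      · simp only [hx₁d, hx₂d, hwhS i hi, mul_zero, add_zero, sub_zero]
        exact ⟨hμ01 i, hμ01 i⟩
    have hx₁P : x₁ ∈ P := by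
      refine ⟨fun i => (hbounds i).1, ?_, ?_, ?_⟩
      · intro i hi
        simp only [hx₁d, hμsupp i hi, hwhS i (fun h => hi (hSsub h)), mul_zero, add_zero]
      · simp only [hx₁d]
        rw [Finset.sum_add_distrib, hμsum, ← Finset.mul_sum, hwhA1, mul_zero, add_zero]
      · simp only [hx₁d]
        have : ∀ i ∈ A, (μ i + ε * wh i) • v i = μ i • v i + ε • (wh i • v i) := by
          intro i _; rw [add_smul, mul_smul]
        rw [Finset.sum_congr rfl this, Finset.sum_add_distrib, hμvec, ← Finset.smul_sum,
          hwhA2, smul_zero, add_zero]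
    have hx₂P : x₂ ∈ P := by
      refine ⟨fun i => (hbounds i).2, ?_, ?_, ?_⟩
      · intro i hi
        simp only [hx₂d, hμsupp i hi, hwhS i (fun h => hi (hSsub h)), mul_zero, sub_zero]
      · simp only [hx₂d]
        rw [Finset.sum_sub_distrib, hμsum, ← Finset.mul_sum, hwhA1, mul_zero, sub_zero]
      · simp only [hx₂d]
        have : ∀ i ∈ A, (μ i - ε * wh i) • v i = μ i • v i - ε • (wh i • v i) := by
          intro i _; rw [sub_smul, mul_smul]
        rw [Finset.sum_congr rfl this, Finset.sum_sub_distrib, hμvec, ← Finset.smul_sum,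
          hwhA2, smul_zero, sub_zero]
    have hseg : μ ∈ openSegment ℝ x₁ x₂ := by
      refine ⟨1/2, 1/2, by norm_num, by norm_num, by norm_num, ?_⟩
      funext i
      simp only [Pi.add_apply, Pi.smul_apply, smul_eq_mul, hx₁d, hx₂d]
      ring
    have hx₁eq : x₁ = μ := hμext hx₁P hx₂P hseg
    apply hw0
    funext j
    have : μ (j : Fin n) + ε * wh (j : Fin n) = μ (j : Fin n) := by
      exact congrFun hx₁eq (j : Fin n)
    have hwj : wh (j : Fin n) = 0 := by
      have := this
      nlinarith [hε0]
    rw [← hwhval j] at *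
    simpa using hwj
  obtain ⟨i0, hi0A, hi0⟩ := hzero
  refine ⟨A.erase i0, μ, Finset.erase_subset _ _, ?_, hμ01, ?_, ?_, ?_⟩
  · rw [Finset.card_erase_of_mem hi0A, hcard]
  · intro j hj
    by_cases hjA : j ∈ A
    · have : j = i0 := by
        by_contra hne
        exact hj (Finset.mem_erase.2 ⟨hne, hjA⟩)
      rw [this]; exact hi0
    · exact hμsupp j hjA
  · rw [Finset.sum_erase A (by rw [hi0] : μ i0 = 0)]
    exact hμsum
  · rw [Finset.sum_erase A (by rw [hi0, zero_smul] : μ i0 • v i0 = 0)]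
    exact hμvec


lemma steinitz_tri {d : ℕ} {N : (Fin d → ℝ) → ℝ}
    (hN0 : N 0 = 0)
    (hNtri : ∀ u w : Fin d → ℝ, N (u + w) ≤ N u + N w)
    {α : Type*} (s : Finset α) (f : α → Fin d → ℝ) :
    N (∑ i ∈ s, f i) ≤ ∑ i ∈ s, N (f i) := by
  classical
  induction s using Finset.cons_induction with
  | empty => simp [hN0]
  | cons a s ha ih =>
    rw [Finset.sum_cons, Finset.sum_cons]
    exact le_trans (hNtri _ _) (by linarith)

lemma steinitz_bound {d n : ℕ} {N : (Fin d → ℝ) → ℝ}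
    (hN0 : N 0 = 0)
    (hNhom : ∀ (c : ℝ) (w : Fin d → ℝ), N (c • w) = |c| * N w)
    (hNtri : ∀ u w : Fin d → ℝ, N (u + w) ≤ N u + N w)
    (v : Fin n → Fin d → ℝ) (hbound : ∀ j, N (v j) ≤ 1)
    (hNn : ∀ u, 0 ≤ N u)
    (A : Finset (Fin n)) (lam : Fin n → ℝ)
    (h01 : ∀ i, 0 ≤ lam i ∧ lam i ≤ 1)
    (hsumA : ∑ i ∈ A, lam i = (A.card : ℝ) - d)
    (hvec : ∑ i ∈ A, lam i • v i = 0) :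
    N (∑ i ∈ A, v i) ≤ d := by
  have key : ∑ i ∈ A, (1 - lam i) • v i = ∑ i ∈ A, v i := by
    rw [Finset.sum_congr rfl (fun i (_ : i ∈ A) => by rw [sub_smul, one_smul] :
      ∀ i ∈ A, (1 - lam i) • v i = v i - lam i • v i)]
    rw [Finset.sum_sub_distrib, hvec, sub_zero]
  calc N (∑ i ∈ A, v i) = N (∑ i ∈ A, (1 - lam i) • v i) := by rw [key]
    _ ≤ ∑ i ∈ A, N ((1 - lam i) • v i) := steinitz_tri hN0 hNtri _ _
    _ = ∑ i ∈ A, (1 - lam i) * N (v i) := by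
        refine Finset.sum_congr rfl fun i _ => ?_
        rw [hNhom, abs_of_nonneg (by linarith [(h01 i).2])]
    _ ≤ ∑ i ∈ A, (1 - lam i) := by
        refine Finset.sum_le_sum fun i _ => ?_
        have h1 : 0 ≤ 1 - lam i := by linarith [(h01 i).2]
        calc (1 - lam i) * N (v i) ≤ (1 - lam i) * 1 :=
              mul_le_mul_of_nonneg_left (hbound i) h1
          _ = 1 - lam i := by ring
    _ = d := by
        rw [Finset.sum_sub_distrib, hsumA, Finset.sum_const, nsmul_eq_mul, mul_one]
        ring

/-- **Steinitz Lemma.** For any norm `N` on `ℝ^d` and vectors `v_1,…,v_n` summing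
to zero with `N (v i) ≤ 1`, there is a permutation `σ` such that every prefix sum
of the reordered sequence has norm at most `d`. -/
theorem steinitz_lemma
    (d n : ℕ) (hd : 1 ≤ d) (hn : 1 ≤ n)
    (N : (Fin d → ℝ) → ℝ)
    (hN0 : ∀ v : Fin d → ℝ, N v = 0 ↔ v = 0)
    (hNhom : ∀ (c : ℝ) (v : Fin d → ℝ), N (c • v) = |c| * N v)
    (hNtri : ∀ u v : Fin d → ℝ, N (u + v) ≤ N u + N v)
    (v : Fin n → Fin d → ℝ)
    (hsum : ∑ j, v j = 0)
    (hbound : ∀ j, N (v j) ≤ 1) :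
    ∃ σ : Equiv.Perm (Fin n),
      ∀ i : Fin n, N (∑ k ∈ Finset.Iic i, v (σ k)) ≤ d := by
  classical
  have hN0' : N 0 = 0 := (hN0 0).2 rfl
  have hNn : ∀ u, 0 ≤ N u := by
    intro u
    have h1 := hNtri u (-u)
    have h2 : N (-u) = N u := by
      have := hNhom (-1) u
      simpa using this
    rw [add_neg_cancel, hN0', h2] at h1
    linarith
  by_cases hdn : n ≤ d
  · -- trivial case : use the identity
    refine ⟨Equiv.refl _, fun i => ?_⟩
    calc N (∑ k ∈ Finset.Iic i, v ((Equiv.refl (Fin n)) k))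
        ≤ ∑ k ∈ Finset.Iic i, N (v k) := steinitz_tri hN0' hNtri _ _
      _ ≤ (Finset.Iic i).card • (1:ℝ) :=
          Finset.sum_le_card_nsmul _ _ _ (fun k _ => hbound k)
      _ = ((i : ℕ) + 1 : ℕ) := by rw [Fin.card_Iic]; simp
      _ ≤ d := by
          have h1 : (i : ℕ) + 1 ≤ n := i.isLt
          exact_mod_cast le_trans h1 hdn
  · push_neg at hdn
    -- build the chain of good sets
    have chain : ∀ t : ℕ, t ≤ n → ∃ C : ℕ → Finset (Fin n),
        C 0 = Finset.univ ∧ (∀ j, j < t → C (j+1) ⊆ C j) ∧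
        (∀ j, j ≤ t → (C j).card = n - j) ∧
        (∀ j, j ≤ t → j ≤ n - d → ∃ lam : Fin n → ℝ,
          (∀ i, 0 ≤ lam i ∧ lam i ≤ 1) ∧ (∀ i ∉ C j, lam i = 0) ∧
          (∑ i ∈ C j, lam i = ((n - j : ℕ) : ℝ) - d) ∧ ∑ i ∈ C j, lam i • v i = 0) := by
      intro t
      induction t with
      | zero =>
        intro _
        refine ⟨fun _ => Finset.univ, rfl, by omega, ?_, ?_⟩
        · intro j hj
          interval_cases j
          simp
        · intro j hj _
          interval_cases j
          refine ⟨fun _ => ((n:ℝ) - d)/n, ?_, ?_, ?_, ?_⟩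
          · intro i
            have hn0 : (0:ℝ) < n := by exact_mod_cast hn
            have hdr : (d:ℝ) < n := by exact_mod_cast hdn
            constructor
            · apply div_nonneg (by linarith) hn0.le
            · rw [div_le_one hn0]
              have : (0:ℝ) ≤ d := Nat.cast_nonneg d
              linarith
          · intro i hi; exact absurd (Finset.mem_univ i) hi
          · rw [Finset.sum_const, Finset.card_univ, Fintype.card_fin, nsmul_eq_mul]
            have hn0 : (n:ℝ) ≠ 0 := by positivity
            field_simp
            simp
          · rw [← Finset.smul_sum, hsum, smul_zero]
      | succ t ih =>
        intro ht
        obtain ⟨C, hC0, hCsub, hCcard, hClam⟩ := ih (by omega)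
        by_cases hc : t + 1 ≤ n - d
        · -- use the exchange step
          obtain ⟨lam, hl01, hlsupp, hlsum, hlvec⟩ := hClam t (le_refl t) (by omega)
          have hkd : d + 1 ≤ n - t := by omega
          obtain ⟨A', lam', hsub', hcard', h01', hsupp', hsum', hvec'⟩ :=
            steinitz_step d n v (C t) (n - t) hkd (hCcard t (le_refl t)) lam hl01 hlsupp
              (by rw [hlsum]) hlvec
          refine ⟨fun j => if j ≤ t then C j else A', by simp [hC0], ?_, ?_, ?_⟩
          · intro j hj
            by_cases hjt : j + 1 ≤ t
            · simp only [if_pos hjt, if_pos (by omega : j ≤ t)]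
              exact hCsub j (by omega)
            · have hjeq : j = t := by omega
              subst hjeq
              simp only [if_neg (by omega : ¬ (j + 1 ≤ j)), if_pos (le_refl j)]
              exact hsub'
          · intro j hj
            by_cases hjt : j ≤ t
            · simp only [if_pos hjt]; exact hCcard j hjt
            · have hjeq : j = t + 1 := by omega
              subst hjeq
              simp only [if_neg hjt]
              omega
          · intro j hj _
            by_cases hjt : j ≤ t
            · simp only [if_pos hjt]; exact hClam j hjt (by omega)
            · have hjeq : j = t + 1 := by omega
              subst hjeq
              simp only [if_neg hjt]
              refine ⟨lam', h01', hsupp', ?_, hvec'⟩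
              rw [hsum']
              have h1 : ((n - t : ℕ) : ℝ) = (n:ℝ) - t := by
                rw [Nat.cast_sub (by omega)]
              have h2 : ((n - (t+1) : ℕ) : ℝ) = (n:ℝ) - (t+1) := by
                rw [Nat.cast_sub (by omega)]
                push_cast
                ring
              rw [h1, h2]
              push_cast
              ring
        · -- just shrink arbitrarily
          obtain ⟨A', hsub', hcard'⟩ :=
            Finset.exists_subset_card_eq
              (by rw [hCcard t (le_refl t)]; omega : n - (t+1) ≤ (C t).card)
          refine ⟨fun j => if j ≤ t then C j else A', by simp [hC0], ?_, ?_, ?_⟩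
          · intro j hj
            by_cases hjt : j + 1 ≤ t
            · simp only [if_pos hjt, if_pos (by omega : j ≤ t)]
              exact hCsub j (by omega)
            · have hjeq : j = t := by omega
              subst hjeq
              simp only [if_neg (by omega : ¬ (j + 1 ≤ j)), if_pos (le_refl j)]
              exact hsub'
          · intro j hj
            by_cases hjt : j ≤ t
            · simp only [if_pos hjt]; exact hCcard j hjt
            · have hjeq : j = t + 1 := by omega
              subst hjeq
              simp only [if_neg hjt]
              exact hcard'
          · intro j hj hjd
            by_cases hjt : j ≤ t
            · simp only [if_pos hjt]; exact hClam j hjt (by omega)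
            · omega
    obtain ⟨C, hC0, hCsub, hCcard, hClam⟩ := chain n (le_refl n)
    set B : ℕ → Finset (Fin n) := fun k => C (n - k) with hB
    have hBstep : ∀ k, B k ⊆ B (k + 1) := by
      intro k
      by_cases hk : k < n
      · have h1 : n - k = (n - (k+1)) + 1 := by omega
        rw [hB]
        simp only
        rw [h1]
        exact hCsub (n - (k+1)) (by omega)
      · have h : n - k = n - (k+1) := by omega
        rw [hB]
        simp only [h]
        exact Finset.Subset.refl _
    have hBmono : Monotone B := monotone_nat_of_le_succ hBstep
    have hBcard : ∀ k, k ≤ n → (B k).card = k := by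
      intro k hk
      rw [hB]
      simp only
      rw [hCcard (n - k) (by omega)]
      omega
    have hBgood : ∀ k, d ≤ k → k ≤ n → N (∑ i ∈ B k, v i) ≤ d := by
      intro k hkd hkn
      obtain ⟨lam, h01, hsupp, hsumB, hvecB⟩ := hClam (n - k) (by omega) (by omega)
      refine steinitz_bound hN0' hNhom hNtri v hbound hNn (B k) lam h01 ?_ hvecB
      rw [hBcard k hkn]
      have h2 : ((n - (n - k) : ℕ) : ℝ) = (k : ℝ) := by
        congr 1
        omega
      rw [← h2]
      exact hsumB
    -- the distinguishing elements
    have hf : ∀ j : Fin n, ∃ x, B ((j : ℕ) + 1) \ B (j : ℕ) = {x} := by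
      intro j
      rw [← Finset.card_eq_one]
      rw [Finset.card_sdiff_of_subset (hBstep j)]
      rw [hBcard _ (by have := j.isLt; omega), hBcard _ (by have := j.isLt; omega : (j:ℕ) ≤ n)]
      omega
    choose f hfeq using hf
    have hfmem : ∀ j : Fin n, f j ∈ B ((j:ℕ)+1) ∧ f j ∉ B (j:ℕ) := by
      intro j
      have : f j ∈ B ((j:ℕ)+1) \ B (j:ℕ) := by
        rw [hfeq j]; exact Finset.mem_singleton_self _
      exact ⟨(Finset.mem_sdiff.1 this).1, (Finset.mem_sdiff.1 this).2⟩
    have hinj : Function.Injective f := by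
      intro a b hab
      by_contra hne
      rcases Ne.lt_or_gt hne with h | h
      · have h1 : f a ∈ B ((a:ℕ)+1) := (hfmem a).1
        have h2 : f a ∈ B (b:ℕ) := hBmono (by exact_mod_cast h : (a:ℕ) + 1 ≤ (b:ℕ)) h1
        rw [hab] at h2
        exact (hfmem b).2 h2
      · have h1 : f b ∈ B ((b:ℕ)+1) := (hfmem b).1
        have h2 : f b ∈ B (a:ℕ) := hBmono (by exact_mod_cast h : (b:ℕ) + 1 ≤ (a:ℕ)) h1
        rw [← hab] at h2
        exact (hfmem a).2 h2
    refine ⟨Equiv.ofBijective f (Finite.injective_iff_bijective.1 hinj), fun i => ?_⟩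
    have himg : Finset.image f (Finset.Iic i) = B ((i:ℕ)+1) := by
      apply Finset.eq_of_subset_of_card_le
      · intro x hx
        obtain ⟨k, hk, rfl⟩ := Finset.mem_image.1 hx
        have hk0 : (k:ℕ) ≤ (i:ℕ) := Fin.le_def.1 (Finset.mem_Iic.1 hk)
        exact hBmono (by omega : (k:ℕ) + 1 ≤ (i:ℕ) + 1) (hfmem k).1
      · have h1 : (Finset.image f (Finset.Iic i)).card = (i:ℕ) + 1 := by
          rw [Finset.card_image_of_injective _ hinj, Fin.card_Iic]
        rw [h1, hBcard _ (by have := i.isLt; omega)]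
    have hsum' : ∑ k ∈ Finset.Iic i, v ((Equiv.ofBijective f (Finite.injective_iff_bijective.1 hinj)) k)
        = ∑ j ∈ B ((i:ℕ)+1), v j := by
      rw [← himg, Finset.sum_image (fun a _ b _ h => hinj h)]
      rfl
    rw [hsum']
    by_cases hid : d ≤ (i:ℕ) + 1
    · exact hBgood ((i:ℕ)+1) hid (by have := i.isLt; omega)
    · push_neg at hid
      calc N (∑ j ∈ B ((i:ℕ)+1), v j) ≤ ∑ j ∈ B ((i:ℕ)+1), N (v j) :=
            steinitz_tri hN0' hNtri _ _
        _ ≤ (B ((i:ℕ)+1)).card • (1:ℝ) :=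
            Finset.sum_le_card_nsmul _ _ _ (fun k _ => hbound k)
        _ = ((i:ℕ) + 1 : ℕ) := by
            rw [hBcard _ (by have := i.isLt; omega)]; simp
        _ ≤ d := by exact_mod_cast hid.le
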